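/- For every odd prime p, the Catalan number C_{p−1} = C(2p−2,p−1)/p satisfies C_{p−1} ≡ −(2p+1) (mod p²). -/

import Mathlib

open Finset

/-- Central binomial coefficient mod p²: `C(2p,p) ≡ 2 [p²]` for prime `p`. -/
lemma centralBinom_modeq (p : ℕ) (hp : p.Prime) :
    ((2 * p).choose p : ℤ) ≡ 2 [ZMOD (p : ℤ)^2] := by
  obtain ⟨q, rfl⟩ : ∃ q, p = q + 1 := ⟨p - 1, (Nat.succ_pred_eq_of_pos hp.pos).symm⟩
  set p := q + 1 with hpdef
  have hvdm : (2 * p).choose p =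
      ∑ k ∈ Finset.range (p + 1), p.choose k * p.choose (p - k) := by
    rw [two_mul, Nat.add_choose_eq]
    rw [Finset.Nat.sum_antidiagonal_eq_sum_range_succ_mk]
  have key : ((2 * p).choose p : ℤ) - 2 =
      ∑ i ∈ Finset.range q, ((p.choose (i+1) : ℤ) * (p.choose (p - (i+1)) : ℤ)) := by
    rw [hvdm]
    push_cast
    rw [show p + 1 = q + 1 + 1 from rfl, Finset.sum_range_succ, Finset.sum_range_succ']
    simp [Nat.choose_self, Nat.choose_zero_right, Nat.sub_self, ← hpdef]
    ring
  rw [Int.modEq_iff_dvd, show (2:ℤ) - ((2 * p).choose p : ℤ)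
      = -(((2 * p).choose p : ℤ) - 2) by ring, dvd_neg, key]
  apply Finset.dvd_sum
  intro i hi
  rw [Finset.mem_range] at hi
  have h1 : (p : ℤ) ∣ (p.choose (i+1) : ℤ) := by
    exact_mod_cast Int.natCast_dvd_natCast.mpr (hp.dvd_choose_self (by omega) (by omega))
  have h2 : (p : ℤ) ∣ (p.choose (p - (i+1)) : ℤ) := by
    exact_mod_cast Int.natCast_dvd_natCast.mpr (hp.dvd_choose_self (by omega) (by omega))
  rw [sq]
  exact mul_dvd_mul h1 h2

theorem catalan_pred_prime (p : ℕ) (hp : p.Prime) (hp2 : p ≠ 2) :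
    (catalan (p - 1) : ℤ) ≡ -(2 * (p : ℤ) + 1) [ZMOD (p : ℤ)^2] := by
  have hp1 : 1 ≤ p := hp.one_lt.le
  -- key identity: 2 * (2p - 1) * catalan (p-1) = centralBinom p = (2p).choose p
  have hcat : p * catalan (p - 1) = (p - 1).centralBinom := by
    have := succ_mul_catalan_eq_centralBinom (p - 1)
    rwa [Nat.sub_add_cancel hp1] at this
  have hcb : p * p.centralBinom = 2 * (2 * (p - 1) + 1) * ((p - 1).centralBinom) := by
    have := Nat.succ_mul_centralBinom_succ (p - 1)
    rwa [Nat.sub_add_cancel hp1] at this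
  have hkey : (p : ℤ) * p.centralBinom
      = (p : ℤ) * (2 * (2 * (p : ℤ) - 1) * (catalan (p - 1) : ℤ)) := by
    have h1 : ((p * p.centralBinom : ℕ) : ℤ)
        = ((2 * (2 * (p - 1) + 1) * (p * catalan (p - 1)) : ℕ) : ℤ) := by
      rw [hcat, hcb]
    push_cast [hp1] at h1
    rw [h1]; ring
  have hkey2 : (p.centralBinom : ℤ) = 2 * (2 * (p : ℤ) - 1) * (catalan (p - 1) : ℤ) :=
    mul_left_cancel₀ (by exact_mod_cast hp.pos.ne') hkey
  have hmod : 2 * (2 * (p : ℤ) - 1) * (catalan (p - 1) : ℤ) ≡ 2 [ZMOD (p : ℤ)^2] := by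
    rw [← hkey2]
    exact_mod_cast centralBinom_modeq p hp
  have hmod2 : 2 * (2 * (p : ℤ) - 1) * (-(2 * (p : ℤ) + 1)) ≡ 2 [ZMOD (p : ℤ)^2] := by
    rw [Int.modEq_iff_dvd]
    exact ⟨8, by ring⟩
  have h := hmod.trans hmod2.symm
  have hgcd : Int.gcd ((p : ℤ)^2) (2 * (2 * (p : ℤ) - 1)) = 1 := by
    have h2 : ¬ (p ∣ 2) := fun h => hp2 ((Nat.prime_dvd_prime_iff_eq hp Nat.prime_two).mp h)
    have hc2 : Nat.Coprime p 2 := (Nat.Prime.coprime_iff_not_dvd hp).mpr h2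
    have hco : Nat.Coprime p (2 * p - 1) := by
      rw [Nat.Prime.coprime_iff_not_dvd hp]
      intro hdvd
      have h1 : p ∣ 2 * p - (2 * p - 1) := Nat.dvd_sub (dvd_mul_left p 2) hdvd
      have : 2 * p - (2 * p - 1) = 1 := by omega
      rw [this] at h1
      exact hp.one_lt.ne' (Nat.dvd_one.mp h1)
    have : Nat.Coprime (p ^ 2) (2 * (2 * p - 1)) :=
      Nat.Coprime.pow_left 2 (Nat.Coprime.mul_right hc2 hco)
    have hcast : (2 * (2 * (p : ℤ) - 1)) = ((2 * (2 * p - 1) : ℕ) : ℤ) := by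
      omega
    rw [hcast, show ((p : ℤ)^2) = ((p^2 : ℕ) : ℤ) by push_cast; ring, Int.gcd_natCast_natCast]
    exact this
  have := Int.ModEq.cancel_left_div_gcd (c := 2 * (2 * (p : ℤ) - 1))
    (by positivity : (0:ℤ) < (p : ℤ)^2) h
  rwa [hgcd, Nat.cast_one, Int.ediv_one] at this
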